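/- In Z/4Z, for every n ≡ 1 (mod 3) and every n-tuple (a_1,...,a_n) with all a_i ∈ {1, -1} (mod 4), there exist x, y ∈ {1, -1} such that M_{n+2}(x, a_1, ..., a_n, y) = ±Id over Z/4Z. In particular, the continuant K_n(a_1,...,a_n) of any such tuple equals ±1 in Z/4Z. -/

import Mathlib

open Matrix

/-- `Mlist [a₁,…,aₙ] = M(aₙ)⋯M(a₁)` where `M(a) = [[a,-1],[1,0]]`. -/
def Mlist {A : Type*} [CommRing A] (l : List A) : Matrix (Fin 2) (Fin 2) A :=
  ((l.map (fun a => !![a, -1; 1, 0])).reverse).prod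

/-- The continuant `K` (tridiagonal determinant), with `K [] = 1`. -/
def cont {A : Type*} [CommRing A] : List A → A
  | [] => 1
  | [a] => a
  | a :: b :: l => a * cont (b :: l) - cont l

/-- `(a₁,…,aₙ) ⊕ (b₁,…,bₘ) = (a₁+bₘ, a₂,…,aₙ₋₁, aₙ+b₁, b₂,…,bₘ₋₁)` (for lists of length ≥ 2). -/
def oplus {A : Type*} [CommRing A] (la lb : List A) : List A :=
  match la, lb with
  | a1 :: ta, b1 :: tb =>
      (a1 + tb.getLastD b1) :: (ta.dropLast ++ ((ta.getLastD a1 + b1) :: tb.dropLast))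
  | _, _ => []

lemma Mlist_nil {A : Type*} [CommRing A] : Mlist ([] : List A) = 1 := rfl

lemma Mlist_cons {A : Type*} [CommRing A] (a : A) (l : List A) :
    Mlist (a :: l) = Mlist l * !![a, -1; 1, 0] := by
  simp [Mlist]

lemma Mlist_append_singleton {A : Type*} [CommRing A] (l : List A) (y : A) :
    Mlist (l ++ [y]) = !![y, -1; 1, 0] * Mlist l := by
  simp [Mlist]

lemma cont_entries {A : Type*} [CommRing A] (l : List A) :
    ∀ a : A, Mlist (a :: l) 0 0 = cont (a :: l) ∧ Mlist (a :: l) 0 1 = -cont l := by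
  induction l with
  | nil =>
      intro a
      rw [Mlist_cons, Mlist_nil, one_mul]
      simp [cont]
  | cons b t ih =>
      intro a
      obtain ⟨h1, h2⟩ := ih b
      rw [Mlist_cons]
      constructor
      · rw [show ((Mlist (b :: t) * !![a, -1; 1, 0]) 0 0 =
            Mlist (b :: t) 0 0 * a + Mlist (b :: t) 0 1 * 1) by
            simp [Matrix.mul_apply, Fin.sum_univ_two]]
        rw [h1, h2, cont]
        ring
      · rw [show ((Mlist (b :: t) * !![a, -1; 1, 0]) 0 1 =
            Mlist (b :: t) 0 0 * (-1) + Mlist (b :: t) 0 1 * 0) by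
            simp [Matrix.mul_apply, Fin.sum_univ_two]]
        rw [h1]
        ring

instance : DecidableEq (Matrix (Fin 2) (Fin 2) (ZMod 4)) :=
  fun A B => decidable_of_iff (A 0 0 = B 0 0 ∧ A 0 1 = B 0 1 ∧ A 1 0 = B 1 0 ∧ A 1 1 = B 1 1) (by
    constructor
    · rintro ⟨h1, h2, h3, h4⟩
      ext i j
      fin_cases i <;> fin_cases j <;> assumption
    · rintro rfl
      simp)

def U0 (m : Matrix (Fin 2) (Fin 2) (ZMod 4)) : Prop :=
  m = !![1, 0; 0, 1] ∨ m = !![1, 0; 2, 1] ∨ m = !![1, 2; 0, 1] ∨ m = !![1, 2; 2, 1] ∨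
  m = !![3, 0; 0, 3] ∨ m = !![3, 0; 2, 3] ∨ m = !![3, 2; 0, 3] ∨ m = !![3, 2; 2, 3]

def U1 (m : Matrix (Fin 2) (Fin 2) (ZMod 4)) : Prop :=
  m = !![1, 1; 1, 2] ∨ m = !![1, 1; 3, 0] ∨ m = !![1, 3; 1, 0] ∨ m = !![1, 3; 3, 2] ∨
  m = !![3, 1; 1, 2] ∨ m = !![3, 1; 3, 0] ∨ m = !![3, 3; 1, 0] ∨ m = !![3, 3; 3, 2]

def U2 (m : Matrix (Fin 2) (Fin 2) (ZMod 4)) : Prop :=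
  m = !![0, 1; 3, 1] ∨ m = !![0, 1; 3, 3] ∨ m = !![0, 3; 1, 1] ∨ m = !![0, 3; 1, 3] ∨
  m = !![2, 1; 1, 1] ∨ m = !![2, 1; 1, 3] ∨ m = !![2, 3; 3, 1] ∨ m = !![2, 3; 3, 3]

lemma step01 (m : Matrix (Fin 2) (Fin 2) (ZMod 4)) (a : ZMod 4)
    (ha : a = 1 ∨ a = -1) (hm : U0 m) : U1 (m * !![a, -1; 1, 0]) := by
  unfold U1
  rcases ha with rfl | rfl <;>
  rcases hm with rfl | rfl | rfl | rfl | rfl | rfl | rfl | rfl <;> decide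

lemma step12 (m : Matrix (Fin 2) (Fin 2) (ZMod 4)) (a : ZMod 4)
    (ha : a = 1 ∨ a = -1) (hm : U1 m) : U2 (m * !![a, -1; 1, 0]) := by
  unfold U2
  rcases ha with rfl | rfl <;>
  rcases hm with rfl | rfl | rfl | rfl | rfl | rfl | rfl | rfl <;> decide

lemma step20 (m : Matrix (Fin 2) (Fin 2) (ZMod 4)) (a : ZMod 4)
    (ha : a = 1 ∨ a = -1) (hm : U2 m) : U0 (m * !![a, -1; 1, 0]) := by
  unfold U0
  rcases ha with rfl | rfl <;>
  rcases hm with rfl | rfl | rfl | rfl | rfl | rfl | rfl | rfl <;> decide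

lemma invariant (l : List (ZMod 4)) (h : ∀ a ∈ l, a = 1 ∨ a = -1) :
    (l.length % 3 = 0 → U0 (Mlist l)) ∧ (l.length % 3 = 1 → U1 (Mlist l)) ∧
    (l.length % 3 = 2 → U2 (Mlist l)) := by
  induction l with
  | nil =>
      refine ⟨fun _ => ?_, fun h => by simp at h, fun h => by simp at h⟩
      rw [Mlist_nil]
      unfold U0
      left; decide
  | cons a t ih =>
      have ha : a = 1 ∨ a = -1 := h a (List.mem_cons_self (a := a) (l := t))
      have ht : ∀ b ∈ t, b = 1 ∨ b = -1 := fun b hb => h b (List.mem_cons_of_mem a hb)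
      obtain ⟨i0, i1, i2⟩ := ih ht
      rw [Mlist_cons]
      simp only [List.length_cons]
      refine ⟨fun h0 => ?_, fun h1 => ?_, fun h2 => ?_⟩
      · exact step20 _ _ ha (i2 (by omega))
      · exact step01 _ _ ha (i0 (by omega))
      · exact step12 _ _ ha (i1 (by omega))

theorem stmt12 (n : ℕ) (hn : n % 3 = 1) (l : List (ZMod 4)) (hl : l.length = n)
    (h : ∀ a ∈ l, a = 1 ∨ a = -1) :
    (∃ x y : ZMod 4, (x = 1 ∨ x = -1) ∧ (y = 1 ∨ y = -1) ∧
      (Mlist (x :: (l ++ [y])) = 1 ∨ Mlist (x :: (l ++ [y])) = -1)) ∧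
    (cont l = 1 ∨ cont l = -1) := by
  have hlen : l.length % 3 = 1 := by rw [hl]; exact hn
  have hU : U1 (Mlist l) := (invariant l h).2.1 hlen
  -- l is nonempty
  obtain ⟨a, t, rfl⟩ : ∃ a t, l = a :: t := by
    cases l with
    | nil => simp at hlen
    | cons a t => exact ⟨a, t, rfl⟩
  have hc : Mlist (a :: t) 0 0 = cont (a :: t) := (cont_entries t a).1
  constructor
  · -- existence of x, y
    have key : ∀ m : Matrix (Fin 2) (Fin 2) (ZMod 4), U1 m →
        ∃ x y : ZMod 4, (x = 1 ∨ x = -1) ∧ (y = 1 ∨ y = -1) ∧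
        (!![y, -1; 1, 0] * m * !![x, -1; 1, 0] = 1 ∨
         !![y, -1; 1, 0] * m * !![x, -1; 1, 0] = -1) := by
      intro m hm
      rcases hm with rfl | rfl | rfl | rfl | rfl | rfl | rfl | rfl
      · exact ⟨-1, 1, Or.inr rfl, Or.inl rfl, by decide⟩
      · exact ⟨-1, -1, Or.inr rfl, Or.inr rfl, by decide⟩
      · exact ⟨1, 1, Or.inl rfl, Or.inl rfl, by decide⟩
      · exact ⟨1, -1, Or.inl rfl, Or.inr rfl, by decide⟩
      · exact ⟨1, -1, Or.inl rfl, Or.inr rfl, by decide⟩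
      · exact ⟨1, 1, Or.inl rfl, Or.inl rfl, by decide⟩
      · exact ⟨-1, -1, Or.inr rfl, Or.inr rfl, by decide⟩
      · exact ⟨-1, 1, Or.inr rfl, Or.inl rfl, by decide⟩
    obtain ⟨x, y, hx, hy, hxy⟩ := key _ hU
    refine ⟨x, y, hx, hy, ?_⟩
    rw [Mlist_cons, Mlist_append_singleton]
    exact hxy
  · -- cont = ±1
    rw [← hc]
    rcases hU with hm | hm | hm | hm | hm | hm | hm | hm <;> rw [hm] <;> decide
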